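/- Let A be a ℤ-graded commutative ring and 𝔭, 𝔮 prime ideals of A with 𝔮 graded. Then the graded localization (A/𝔮)_{[𝔭]} is nonzero if and only if 𝔮 ⊆ 𝔭*. In particular, if 𝔭 is a minimal prime of A, then (A/𝔮)_{[𝔭]} ≠ 0 if and only if 𝔮 = 𝔭. -/

import Mathlib

open DirectSum

lemma stmt_9_aux {A : Type*} [CommRing A] (𝔮 : Ideal A) (T : Submonoid A) :
    Nontrivial (LocalizedModule T (A ⧸ 𝔮)) ↔ ∀ r ∈ T, r ∉ 𝔮 := by
  rw [← not_subsingleton_iff_nontrivial, LocalizedModule.subsingleton_iff]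
  have hsm : ∀ r a : A, r • (Ideal.Quotient.mk 𝔮 a) = Ideal.Quotient.mk 𝔮 (r * a) := by
    intro r a
    rw [← smul_eq_mul]
    exact (Submodule.Quotient.mk_smul 𝔮 r a).symm
  constructor
  · intro h r hrT hr𝔮
    refine h fun m => ?_
    obtain ⟨a, rfl⟩ := Ideal.Quotient.mk_surjective m
    exact ⟨r, hrT, by
      rw [hsm, Ideal.Quotient.eq_zero_iff_mem]
      exact 𝔮.mul_mem_right a hr𝔮⟩
  · intro h hsub
    obtain ⟨r, hrT, hr⟩ := hsub 1
    refine h r hrT ?_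
    rw [← map_one (Ideal.Quotient.mk 𝔮), hsm, mul_one, Ideal.Quotient.eq_zero_iff_mem] at hr
    exact hr

/-- Let `𝔭, 𝔮` be primes of a graded ring `A` with `𝔮` graded, and let `T` be the multiplicative
set of homogeneous elements of `A ∖ 𝔭`. Then the graded localization `(A/𝔮)_{[𝔭]}` is nonzero
iff `𝔮 ⊆ 𝔭*`; and if `𝔭` is a minimal prime of `A`, it is nonzero iff `𝔮 = 𝔭`. -/
theorem stmt_9 {A : Type*} [CommRing A] (𝒜 : ℤ → AddSubgroup A) [GradedRing 𝒜]
    (𝔭 𝔮 : Ideal A) [𝔭.IsPrime] [𝔮.IsPrime] (h𝔮 : Ideal.IsHomogeneous 𝒜 𝔮)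
    (T : Submonoid A) (hT : (T : Set A) = {a : A | SetLike.IsHomogeneousElem 𝒜 a ∧ a ∉ 𝔭}) :
    (Nontrivial (LocalizedModule T (A ⧸ 𝔮)) ↔ 𝔮 ≤ (Ideal.homogeneousCore 𝒜 𝔭).toIdeal) ∧
      (𝔭 ∈ minimalPrimes A →
        (Nontrivial (LocalizedModule T (A ⧸ 𝔮)) ↔ 𝔮 = 𝔭)) := by
  have hTmem : ∀ a : A, a ∈ T ↔ SetLike.IsHomogeneousElem 𝒜 a ∧ a ∉ 𝔭 := fun a => by
    rw [← SetLike.mem_coe, hT]; rfl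
  have main : Nontrivial (LocalizedModule T (A ⧸ 𝔮)) ↔
      𝔮 ≤ (Ideal.homogeneousCore 𝒜 𝔭).toIdeal := by
    classical
    rw [stmt_9_aux]
    constructor
    · intro h x hx𝔮
      -- each homogeneous component of x is in 𝔮, hence (homog, in 𝔭), hence in 𝔭*
      have : ∀ i : ℤ, (DirectSum.decompose 𝒜 x i : A) ∈ (Ideal.homogeneousCore 𝒜 𝔭).toIdeal := by
        intro i
        have h1 : (DirectSum.decompose 𝒜 x i : A) ∈ 𝔮 := h𝔮 i hx𝔮
        have h2 : SetLike.IsHomogeneousElem 𝒜 (DirectSum.decompose 𝒜 x i : A) :=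
          SetLike.isHomogeneousElem_coe _
        have h3 : (DirectSum.decompose 𝒜 x i : A) ∈ 𝔭 := by
          by_contra hnot
          exact h _ ((hTmem _).mpr ⟨h2, hnot⟩) h1
        exact Ideal.mem_homogeneousCore_of_homogeneous_of_mem h2 h3
      have := Ideal.sum_mem _ (fun i (_ : i ∈ (DirectSum.decompose 𝒜 x).support) => this i)
      rwa [DirectSum.sum_support_decompose 𝒜 x] at this
    · intro h r hrT hr𝔮
      exact ((hTmem r).mp hrT).2 (Ideal.toIdeal_homogeneousCore_le 𝒜 𝔭 (h hr𝔮))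
  refine ⟨main, fun hmin => ?_⟩
  rw [main]
  constructor
  · intro h
    have h𝔮𝔭 : 𝔮 ≤ 𝔭 := h.trans (Ideal.toIdeal_homogeneousCore_le 𝒜 𝔭)
    exact le_antisymm h𝔮𝔭 (hmin.2 ⟨inferInstance, bot_le⟩ h𝔮𝔭)
  · rintro rfl
    have hcore : ((Ideal.homogeneousCore 𝒜 𝔮).toIdeal).IsPrime :=
      Ideal.IsPrime.homogeneousCore (𝒜 := 𝒜) inferInstance
    have := hmin.2 ⟨hcore, bot_le⟩ (Ideal.toIdeal_homogeneousCore_le 𝒜 𝔮)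
    exact this
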